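/- arXiv:1406.2050 — 5 statements merged into one kernel-verified Lean document; each statement's English description precedes it below -/
import Mathlib

section
/- Let m and k be positive integers with k ≥ 2, and let H be any graph obtained from the complete graph K_m by deleting exactly k−2 edges. Then R̄(m;k) ≤ R(H;k). -/
open Finset

/-- The color-`i` graph `f⁻¹(i)` of an edge `k`-coloring `f` of the complete
graph on `Fin n`. -/
def colorGraph {n k : ℕ} (f : Sym2 (Fin n) → Fin k) (i : Fin k) :
    SimpleGraph (Fin n) where
  Adj x y := x ≠ y ∧ f s(x, y) = i
  symm := by
    constructor
    rintro x y ⟨hxy, hf⟩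
    exact ⟨hxy.symm, by rwa [Sym2.eq_swap]⟩
  loopless := by constructor; rintro x ⟨h, -⟩; exact h rfl

/-- `α_i(f) ≥ m` : the graph `f⁻¹(i)` has an independent set of size `m`. -/
def HasIndep {n k : ℕ} (f : Sym2 (Fin n) → Fin k) (i : Fin k) (m : ℕ) : Prop :=
  ∃ s : Finset (Fin n), s.card = m ∧ ∀ x ∈ s, ∀ y ∈ s, x ≠ y → f s(x, y) ≠ i

/-- `ω_i(f) ≥ m` : the graph `f⁻¹(i)` has a clique of size `m`. -/
def HasClique {n k : ℕ} (f : Sym2 (Fin n) → Fin k) (i : Fin k) (m : ℕ) : Prop :=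
  ∃ s : Finset (Fin n), s.card = m ∧ ∀ x ∈ s, ∀ y ∈ s, x ≠ y → f s(x, y) = i

/-- The complementary Ramsey number `R̄(m 0, …, m (k-1))`: the least `n` such
that every edge `k`-coloring of `K_n` admits a color `i` with `α_i(f) ≥ m i`. -/
noncomputable def cRamsey {k : ℕ} (m : Fin k → ℕ) : ℕ :=
  sInf {n : ℕ | ∀ f : Sym2 (Fin n) → Fin k, ∃ i : Fin k, HasIndep f i (m i)}

/-- `R̄(m; k)`, i.e. `R̄(m, …, m)` with `m` repeated `k` times. -/
noncomputable def cRamseyU (m k : ℕ) : ℕ := cRamsey (fun _ : Fin k => m)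

/-- The classical multicolor Ramsey number `R(m 0, …, m (k-1))`. -/
noncomputable def ramsey {k : ℕ} (m : Fin k → ℕ) : ℕ :=
  sInf {n : ℕ | ∀ f : Sym2 (Fin n) → Fin k, ∃ i : Fin k, HasClique f i (m i)}

/-- `G` is the disjoint union of `r` copies of `K_{q+1}` and `n - r` copies of
`K_q`: there is a partition of the vertices into `n` parts, `r` of size `q+1`
and `n - r` of size `q`, with two vertices adjacent iff they are distinct and
lie in a common part. -/
def IsCliquePartition {N : ℕ} (G : SimpleGraph (Fin N)) (n q r : ℕ) : Prop :=
  ∃ P : Fin N → Fin n,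
    (∀ x y, G.Adj x y ↔ x ≠ y ∧ P x = P y) ∧
    ∀ j : Fin n,
      (Finset.univ.filter (fun x => P x = j)).card = if (j : ℕ) < r then q + 1 else q

/-- The family `H` of spanning subgraphs is a factorization of the complete
graph: every edge of `K_N` lies in exactly one of the `H i`. -/
def IsFactorization {N k : ℕ} (H : Fin k → SimpleGraph (Fin N)) : Prop :=
  ∀ x y : Fin N, x ≠ y → ∃! i : Fin k, (H i).Adj x y

/-- `f_i(x)`: the number of vertices `y ≠ x` with `f({x, y}) = i`. -/
def degColor {n k : ℕ} (f : Sym2 (Fin n) → Fin k) (i : Fin k) (x : Fin n) : ℕ :=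
  (Finset.univ.filter (fun y => y ≠ x ∧ f s(x, y) = i)).card

/-- `t̄_n(m)`: the number of edges of `T̄_n(m) = r K_{q+1} ∪ (n-r) K_q`, where
`m = n * q + r` with `0 ≤ r < n`. -/
def tbar (n m : ℕ) : ℕ :=
  (m % n) * Nat.choose (m / n + 1) 2 + (n - m % n) * Nat.choose (m / n) 2

/-- The generalized Ramsey number `R(H; k)`: the least `n` such that every
edge `k`-coloring of `K_n` has a color class containing a subgraph
isomorphic to `H`. -/
noncomputable def graphRamsey {m : ℕ} (H : SimpleGraph (Fin m)) (k : ℕ) : ℕ :=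
  sInf {n : ℕ | ∀ f : Sym2 (Fin n) → Fin k, ∃ i : Fin k,
    ∃ φ : Fin m → Fin n, Function.Injective φ ∧
      ∀ x y, H.Adj x y → (colorGraph f i).Adj (φ x) (φ y)}

section Aux

/-- Greedy multicolor Ramsey step: from a large set we can extract a
"pre-clique" sequence. -/
lemma greedy (k : ℕ) (hk : 0 < k) :
    ∀ (t n : ℕ) (f : Sym2 (Fin n) → Fin k) (A : Finset (Fin n)),
      (k+1)^t ≤ A.card →
      ∃ (v : Fin t → Fin n) (c : Fin t → Fin k),
        Function.Injective v ∧ (∀ i, v i ∈ A) ∧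
        ∀ i j : Fin t, i < j → f s(v i, v j) = c i := by
  haveI : Nonempty (Fin k) := ⟨⟨0, hk⟩⟩
  intro t
  induction t with
  | zero =>
    intro n f A _
    exact ⟨Fin.elim0, Fin.elim0, fun i => i.elim0, fun i => i.elim0,
      fun i => i.elim0⟩
  | succ t ih =>
    intro n f A hA
    have hP : 1 ≤ (k+1)^t := Nat.one_le_pow _ _ (by omega)
    have hAne : A.Nonempty := by
      apply Finset.card_pos.mp
      have : 1 ≤ (k+1)^(t+1) := Nat.one_le_pow _ _ (by omega)
      omega
    obtain ⟨a, ha⟩ := hAne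
    have hcard : (Finset.univ : Finset (Fin k)).card * (k+1)^t ≤ (A.erase a).card := by
      rw [Finset.card_univ, Fintype.card_fin, Finset.card_erase_of_mem ha]
      have hpow : (k+1)^(t+1) = (k+1)^t * (k+1) := pow_succ _ _
      have h2 : k * (k+1)^t + 1 ≤ (k+1)^t * (k+1) := by nlinarith
      omega
    obtain ⟨c₀, -, hc₀⟩ :=
      Finset.exists_le_card_fiber_of_mul_le_card_of_maps_to
        (f := fun y => f s(a, y)) (fun x _ => Finset.mem_univ _)
        Finset.univ_nonempty hcard
    obtain ⟨v, c, hvinj, hvmem, hord⟩ := ih n f _ hc₀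
    have hmemB : ∀ i, v i ∈ (A.erase a).filter (fun y => f s(a, y) = c₀) := hvmem
    refine ⟨Fin.cons a v, Fin.cons c₀ c, ?_, ?_, ?_⟩
    · rw [Fin.cons_injective_iff]
      constructor
      · rintro ⟨i, rfl⟩
        have := hmemB i
        simp only [Finset.mem_filter, Finset.mem_erase] at this
        exact this.1.1 rfl
      · exact hvinj
    · intro i
      refine Fin.cases ?_ ?_ i
      · simpa using ha
      · intro j
        have := hmemB j
        simp only [Finset.mem_filter, Finset.mem_erase] at this
        simpa using this.1.2
    · intro i j hij
      rcases Fin.eq_zero_or_eq_succ j with rfl | ⟨j', rfl⟩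
      · exact absurd hij (by simp [Fin.lt_iff_val_lt_val])
      rcases Fin.eq_zero_or_eq_succ i with rfl | ⟨i', rfl⟩
      · simp only [Fin.cons_zero, Fin.cons_succ]
        have := hmemB j'
        simp only [Finset.mem_filter] at this
        exact this.2
      · simp only [Fin.cons_succ]
        exact hord i' j' (by exact_mod_cast Fin.succ_lt_succ_iff.mp hij)

/-- Crude multicolor Ramsey theorem. -/
lemma exists_ramsey (m k : ℕ) (hk : 0 < k) :
    ∃ N : ℕ, ∀ f : Sym2 (Fin N) → Fin k,
      ∃ i : Fin k, ∃ s : Finset (Fin N), s.card = m ∧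
        ∀ x ∈ s, ∀ y ∈ s, x ≠ y → f s(x, y) = i := by
  haveI : Nonempty (Fin k) := ⟨⟨0, hk⟩⟩
  set t := k * (m - 1) + 1 with ht
  refine ⟨(k+1)^t, fun f => ?_⟩
  obtain ⟨v, c, hvinj, -, hord⟩ :=
    greedy k hk t ((k+1)^t) f Finset.univ (by simp)
  have hpig : (Finset.univ : Finset (Fin k)).card * (m - 1)
      < (Finset.univ : Finset (Fin t)).card := by
    simp only [Finset.card_univ, Fintype.card_fin]
    omega
  obtain ⟨i, -, hi⟩ :=
    Finset.exists_lt_card_fiber_of_mul_lt_card_of_maps_to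
      (f := c) (fun x _ => Finset.mem_univ _) hpig
  have him : m ≤ (Finset.univ.filter (fun x => c x = i)).card := by omega
  obtain ⟨T, hTsub, hTcard⟩ := Finset.exists_subset_card_eq him
  · refine ⟨i, T.image v, ?_, ?_⟩
    · rw [Finset.card_image_of_injective _ hvinj, hTcard]
    · intro x hx y hy hxy
      obtain ⟨a, haT, rfl⟩ := Finset.mem_image.mp hx
      obtain ⟨b, hbT, rfl⟩ := Finset.mem_image.mp hy
      have hab : a ≠ b := fun h => hxy (by rw [h])
      have hca : c a = i := (Finset.mem_filter.mp (hTsub haT)).2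
      have hcb : c b = i := (Finset.mem_filter.mp (hTsub hbT)).2
      rcases hab.lt_or_gt with h | h
      · rw [hord a b h, hca]
      · rw [Sym2.eq_swap, hord b a h, hcb]

end Aux

/-- If `H` is obtained from `K_m` by deleting exactly `k - 2` edges, then
`R̄(m; k) ≤ R(H; k)`. -/
theorem cRamseyU_le_graphRamsey (m k : ℕ) (hm : 0 < m) (hk : 2 ≤ k)
    (H : SimpleGraph (Fin m))
    (hH : H.edgeSet.ncard + (k - 2) = m.choose 2) :
    cRamseyU m k ≤ graphRamsey H k := by
  classical
  haveI : NeZero k := ⟨by omega⟩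
  -- Step 1: the defining set of `graphRamsey H k` is nonempty (Ramsey's theorem).
  have hne : {n : ℕ | ∀ f : Sym2 (Fin n) → Fin k, ∃ i : Fin k,
      ∃ φ : Fin m → Fin n, Function.Injective φ ∧
        ∀ x y, H.Adj x y → (colorGraph f i).Adj (φ x) (φ y)}.Nonempty := by
    obtain ⟨N, hN⟩ := exists_ramsey m k (by omega)
    refine ⟨N, fun f => ?_⟩
    obtain ⟨i, s, hcard, hmono⟩ := hN f
    refine ⟨i, fun x => (s.orderIsoOfFin hcard x : Fin N), ?_, ?_⟩
    · intro a b hab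
      exact (s.orderIsoOfFin hcard).injective (Subtype.ext hab)
    · intro x y hxy
      have hx := (s.orderIsoOfFin hcard x).2
      have hy := (s.orderIsoOfFin hcard y).2
      have hxyne : ((s.orderIsoOfFin hcard x : Fin N)) ≠ (s.orderIsoOfFin hcard y : Fin N) := by
        intro h
        exact hxy.ne ((s.orderIsoOfFin hcard).injective (Subtype.ext h))
      exact ⟨hxyne, hmono _ hx _ hy hxyne⟩
  have hmem : ∀ f : Sym2 (Fin (graphRamsey H k)) → Fin k, ∃ i : Fin k,
      ∃ φ : Fin m → Fin (graphRamsey H k), Function.Injective φ ∧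
        ∀ x y, H.Adj x y → (colorGraph f i).Adj (φ x) (φ y) :=
    Nat.sInf_mem hne
  -- Step 2: `graphRamsey H k` belongs to the set defining `cRamseyU m k`.
  apply Nat.sInf_le
  show ∀ f : Sym2 (Fin (graphRamsey H k)) → Fin k, ∃ i : Fin k, HasIndep f i m
  intro f
  obtain ⟨i, φ, hφ, hcopy⟩ := hmem (fun e => f e + 1)
  set j : Fin k := i - 1 with hj
  have hcol : ∀ x y : Fin m, H.Adj x y → f s(φ x, φ y) = j := by
    intro x y hxy
    exact eq_sub_of_add_eq (hcopy x y hxy).2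
  set used : Finset (Fin k) :=
    insert j (Hᶜ.edgeFinset.image (fun e => f (e.map φ))) with hused
  have hsub : ∀ x y : Fin m, x ≠ y → f s(φ x, φ y) ∈ used := by
    intro x y hxy
    by_cases h : H.Adj x y
    · rw [hcol x y h]; exact Finset.mem_insert_self _ _
    · refine Finset.mem_insert_of_mem (Finset.mem_image.mpr ⟨s(x, y), ?_, ?_⟩)
      · rw [SimpleGraph.mem_edgeFinset, SimpleGraph.mem_edgeSet]
        exact ⟨hxy, h⟩
      · rw [Sym2.map_pair_eq]
  -- the number of used colors is at most `k - 1`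
  have hHcard : H.edgeFinset.card = H.edgeSet.ncard :=
    (Set.ncard_eq_toFinset_card' _).symm
  have hsum : H.edgeFinset.card + Hᶜ.edgeFinset.card = m.choose 2 := by
    rw [← Finset.card_union_of_disjoint
      (SimpleGraph.disjoint_edgeFinset.mpr disjoint_compl_right)]
    rw [← SimpleGraph.edgeFinset_sup]
    have h1 : (H ⊔ Hᶜ).edgeFinset.card = (H ⊔ Hᶜ).edgeSet.ncard :=
      (Set.ncard_eq_toFinset_card' _).symm
    have h2 : (⊤ : SimpleGraph (Fin m)).edgeFinset.card
        = (⊤ : SimpleGraph (Fin m)).edgeSet.ncard :=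
      (Set.ncard_eq_toFinset_card' _).symm
    rw [h1, sup_compl_eq_top, ← h2,
      SimpleGraph.card_edgeFinset_top_eq_card_choose_two, Fintype.card_fin]
  have hcompl : Hᶜ.edgeFinset.card = k - 2 := by omega
  have husedcard : used.card ≤ k - 1 := by
    calc used.card ≤ (Hᶜ.edgeFinset.image (fun e => f (e.map φ))).card + 1 :=
          Finset.card_insert_le _ _
      _ ≤ Hᶜ.edgeFinset.card + 1 := by
          exact Nat.add_le_add_right (Finset.card_image_le) 1
      _ ≤ k - 1 := by omega
  have hcnot : ∃ c : Fin k, c ∉ used := by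
    have hcc : (usedᶜ).Nonempty := by
      rw [← Finset.card_pos, Finset.card_compl, Fintype.card_fin]
      omega
    obtain ⟨c, hc⟩ := hcc
    exact ⟨c, Finset.mem_compl.mp hc⟩
  obtain ⟨c, hc⟩ := hcnot
  refine ⟨c, Finset.univ.image φ, ?_, ?_⟩
  · rw [Finset.card_image_of_injective _ hφ, Finset.card_univ, Fintype.card_fin]
  · intro x hx y hy hxy
    obtain ⟨a, -, rfl⟩ := Finset.mem_image.mp hx
    obtain ⟨b, -, rfl⟩ := Finset.mem_image.mp hy
    have hab : a ≠ b := fun h => hxy (by rw [h])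
    intro hcontra
    exact hc (hcontra ▸ hsub a b hab)
end

section
/- Let m₁, m₂, m₃ and n be positive integers greater than 2. Then R̄(m₁,m₂,m₃) ≤ n if and only if for any two Ramsey (m₃,m₂)-graphs G and H on the vertex set {1,…,n} such that H is a subgraph of G, the graph G∖H (the graph on {1,…,n} whose edge set is E(G)∖E(H)) satisfies α(G∖H) ≥ m₁. -/
open Finset

/-- A Ramsey `(s, t)`-graph: `ω(G) < s` and `α(G) < t`. -/
def IsRamseyGraph {n : ℕ} (s t : ℕ) (G : SimpleGraph (Fin n)) : Prop :=
  G.CliqueFree s ∧ Gᶜ.CliqueFree t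

lemma ramsey_two (a b : ℕ) : ∃ N : ℕ, ∀ (f : Sym2 ℕ → Bool) (T : Finset ℕ), N ≤ T.card →
    ∃ s ⊆ T, (s.card = a ∧ ∀ x ∈ s, ∀ y ∈ s, x ≠ y → f s(x, y) = true) ∨
      (s.card = b ∧ ∀ x ∈ s, ∀ y ∈ s, x ≠ y → f s(x, y) = false) := by
  suffices key : ∀ k a b : ℕ, a + b ≤ k →
      ∃ N : ℕ, ∀ (f : Sym2 ℕ → Bool) (T : Finset ℕ), N ≤ T.card →
      ∃ s ⊆ T, (s.card = a ∧ ∀ x ∈ s, ∀ y ∈ s, x ≠ y → f s(x, y) = true) ∨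
        (s.card = b ∧ ∀ x ∈ s, ∀ y ∈ s, x ≠ y → f s(x, y) = false) by
    exact key (a + b) a b le_rfl
  intro k
  induction k with
  | zero =>
    intro a b hab
    obtain rfl : a = 0 := by omega
    exact ⟨0, fun f T _ => ⟨∅, Finset.empty_subset T,
      Or.inl ⟨rfl, by intro x hx; simp at hx⟩⟩⟩
  | succ k ih =>
    intro a b hab
    match a, b with
    | 0, b =>
      exact ⟨0, fun f T _ => ⟨∅, Finset.empty_subset T,
        Or.inl ⟨rfl, by intro x hx; simp at hx⟩⟩⟩
    | a + 1, 0 =>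
      exact ⟨0, fun f T _ => ⟨∅, Finset.empty_subset T,
        Or.inr ⟨rfl, by intro x hx; simp at hx⟩⟩⟩
    | a + 1, b + 1 =>
      obtain ⟨N₁, h₁⟩ := ih a (b + 1) (by omega)
      obtain ⟨N₂, h₂⟩ := ih (a + 1) b (by omega)
      refine ⟨N₁ + N₂ + 1, fun f T hT => ?_⟩
      obtain ⟨v, hv⟩ : T.Nonempty := Finset.card_pos.mp (by omega)
      classical
      set A := (T.erase v).filter (fun x => f s(v, x) = true) with hAdef
      set B := (T.erase v).filter (fun x => ¬ f s(v, x) = true) with hBdef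
      have hABcard : A.card + B.card = (T.erase v).card :=
        Finset.card_filter_add_card_filter_not _
      have herase : (T.erase v).card = T.card - 1 := Finset.card_erase_of_mem hv
      rcases le_or_gt N₁ A.card with hAc | hAc
      · obtain ⟨s, hsA, hs⟩ := h₁ f A hAc
        have hsT : s ⊆ T := hsA.trans ((Finset.filter_subset _ _).trans (Finset.erase_subset _ _))
        rcases hs with ⟨hc, hm⟩ | ⟨hc, hm⟩
        · have hvs : v ∉ s := fun hvs' =>
            (Finset.mem_erase.mp (Finset.filter_subset _ _ (hsA hvs'))).1 rfl
          refine ⟨insert v s, Finset.insert_subset hv hsT, Or.inl ⟨?_, ?_⟩⟩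
          · rw [Finset.card_insert_of_notMem hvs, hc]
          · intro x hx y hy hxy
            rcases Finset.mem_insert.mp hx with rfl | hx' <;>
              rcases Finset.mem_insert.mp hy with rfl | hy'
            · exact absurd rfl hxy
            · exact (Finset.mem_filter.mp (hsA hy')).2
            · rw [Sym2.eq_swap]; exact (Finset.mem_filter.mp (hsA hx')).2
            · exact hm x hx' y hy' hxy
        · exact ⟨s, hsT, Or.inr ⟨hc, hm⟩⟩
      · have hBc : N₂ ≤ B.card := by omega
        obtain ⟨s, hsB, hs⟩ := h₂ f B hBc
        have hsT : s ⊆ T := hsB.trans ((Finset.filter_subset _ _).trans (Finset.erase_subset _ _))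
        rcases hs with ⟨hc, hm⟩ | ⟨hc, hm⟩
        · exact ⟨s, hsT, Or.inl ⟨hc, hm⟩⟩
        · have hvs : v ∉ s := fun hvs' =>
            (Finset.mem_erase.mp (Finset.filter_subset _ _ (hsB hvs'))).1 rfl
          refine ⟨insert v s, Finset.insert_subset hv hsT, Or.inr ⟨?_, ?_⟩⟩
          · rw [Finset.card_insert_of_notMem hvs, hc]
          · intro x hx y hy hxy
            rcases Finset.mem_insert.mp hx with rfl | hx' <;>
              rcases Finset.mem_insert.mp hy with rfl | hy'
            · exact absurd rfl hxy
            · simpa using (Finset.mem_filter.mp (hsB hy')).2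
            · rw [Sym2.eq_swap]; simpa using (Finset.mem_filter.mp (hsB hx')).2
            · exact hm x hx' y hy' hxy

lemma existsRamseyN (m₁ m₃ : ℕ) :
    ∃ N, ∀ f : Sym2 (Fin N) → Fin 3, HasIndep f 0 m₁ ∨ HasIndep f 2 m₃ := by
  obtain ⟨N₀, hN⟩ := ramsey_two m₁ m₃
  refine ⟨max N₀ 1, fun f => ?_⟩
  have hpos : 0 < max N₀ 1 := lt_of_lt_of_le one_pos (le_max_right _ _)
  set φ : ℕ → Fin (max N₀ 1) := fun x => ⟨x % (max N₀ 1), Nat.mod_lt x hpos⟩ with hφ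
  have hinj : ∀ x ∈ Finset.range (max N₀ 1), ∀ y ∈ Finset.range (max N₀ 1), φ x = φ y → x = y := by
    intro x hx y hy h
    have hx' := Finset.mem_range.mp hx
    have hy' := Finset.mem_range.mp hy
    simpa [hφ, Fin.ext_iff, Nat.mod_eq_of_lt hx', Nat.mod_eq_of_lt hy'] using h
  obtain ⟨s, hsub, hs⟩ := hN (fun e => decide (f (e.map φ) = 2)) (Finset.range (max N₀ 1))
    (by rw [Finset.card_range]; exact le_max_left _ _)
  have hinj' : Set.InjOn φ ↑s := fun x hx y hy h => hinj x (hsub hx) y (hsub hy) h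
  rcases hs with ⟨hc, hm⟩ | ⟨hc, hm⟩
  · left
    refine ⟨s.image φ, by rw [Finset.card_image_of_injOn hinj', hc], ?_⟩
    intro x hx y hy hxy
    obtain ⟨p, hp, rfl⟩ := Finset.mem_image.mp hx
    obtain ⟨q, hq, rfl⟩ := Finset.mem_image.mp hy
    have hpq : p ≠ q := fun h => hxy (by rw [h])
    have h2 : f s(φ p, φ q) = 2 := by
      have hh := hm p hp q hq hpq
      simp only [Sym2.map_pair_eq] at hh
      exact of_decide_eq_true hh
    rw [h2]; decide
  · right
    refine ⟨s.image φ, by rw [Finset.card_image_of_injOn hinj', hc], ?_⟩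
    intro x hx y hy hxy
    obtain ⟨p, hp, rfl⟩ := Finset.mem_image.mp hx
    obtain ⟨q, hq, rfl⟩ := Finset.mem_image.mp hy
    have hpq : p ≠ q := fun h => hxy (by rw [h])
    have h2 : ¬ f s(φ p, φ q) = 2 := by
      have hh := hm p hp q hq hpq
      simp only [Sym2.map_pair_eq] at hh
      exact of_decide_eq_false hh
    exact h2
  
lemma indep_mono {k p q : ℕ} (hpq : p ≤ q) (m : Fin k → ℕ)
    (hp : ∀ f : Sym2 (Fin p) → Fin k, ∃ i, HasIndep f i (m i))
    (f : Sym2 (Fin q) → Fin k) : ∃ i, HasIndep f i (m i) := by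
  obtain ⟨i, s, hcard, hind⟩ := hp (fun e => f (e.map (Fin.castLE hpq)))
  refine ⟨i, s.image (Fin.castLE hpq), ?_, ?_⟩
  · rw [Finset.card_image_of_injective _ (Fin.castLE_injective hpq), hcard]
  · intro x hx y hy hxy
    obtain ⟨a, ha, rfl⟩ := Finset.mem_image.mp hx
    obtain ⟨b, hb, rfl⟩ := Finset.mem_image.mp hy
    have hab : a ≠ b := fun h => hxy (by rw [h])
    simpa [Sym2.map_pair_eq] using hind a ha b hb hab

/-- For integers `m₁, m₂, m₃, n > 2`: `R̄(m₁, m₂, m₃) ≤ n` iff for any two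
Ramsey `(m₃, m₂)`-graphs `G ⊇ H` on `[n]`, one has `α(G \ H) ≥ m₁`. -/
theorem cRamsey_le_iff_ramseyGraphs (m₁ m₂ m₃ n : ℕ)
    (h₁ : 2 < m₁) (h₂ : 2 < m₂) (h₃ : 2 < m₃) (hn : 2 < n) :
    cRamsey ![m₁, m₂, m₃] ≤ n ↔
      ∀ G H : SimpleGraph (Fin n), H ≤ G →
        IsRamseyGraph m₃ m₂ G → IsRamseyGraph m₃ m₂ H →
        ∃ s : Finset (Fin n), s.card = m₁ ∧
          ∀ x ∈ s, ∀ y ∈ s, x ≠ y → ¬(G \ H).Adj x y := by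
  classical
  have hS : cRamsey ![m₁, m₂, m₃] ≤ n ↔
      ∀ f : Sym2 (Fin n) → Fin 3, ∃ i, HasIndep f i (![m₁, m₂, m₃] i) := by
    constructor
    · intro h
      obtain ⟨N, hN⟩ := existsRamseyN m₁ m₃
      have hNS : ∀ f : Sym2 (Fin N) → Fin 3, ∃ i, HasIndep f i (![m₁, m₂, m₃] i) := by
        intro f
        rcases hN f with hh | hh
        · exact ⟨0, by simpa using hh⟩
        · exact ⟨2, by simpa using hh⟩
      have hne : {p : ℕ | ∀ f : Sym2 (Fin p) → Fin 3,
          ∃ i, HasIndep f i (![m₁, m₂, m₃] i)}.Nonempty := ⟨N, hNS⟩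
      have hmem := Nat.sInf_mem hne
      exact indep_mono h _ hmem
    · intro h
      exact Nat.sInf_le h
  rw [hS]
  constructor
  · -- colorings → graph statement
    intro hcol G H hHG hG hH
    by_contra hs
    push_neg at hs
    obtain ⟨i, s, hcard, hind⟩ := hcol
      (fun e => if e ∈ H.edgeSet then 1 else if e ∈ G.edgeSet then 0 else 2)
    fin_cases i
    · -- color 0 : G \ H
      simp only [Matrix.cons_val_zero] at hcard
      obtain ⟨x, hx, y, hy, hxy, hadj⟩ := hs s hcard
      have hfne := hind x hx y hy hxy
      simp only [SimpleGraph.mem_edgeSet] at hfne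
      rw [SimpleGraph.sdiff_adj] at hadj
      rw [if_neg hadj.2, if_pos hadj.1] at hfne
      exact hfne rfl
    · -- color 1 : H
      simp only [Matrix.cons_val_one, Matrix.head_cons] at hcard
      refine hH.2 s ⟨?_, hcard⟩
      intro x hx y hy hxy
      refine ⟨hxy, fun hadj => ?_⟩
      have hfne := hind x hx y hy hxy
      simp only [SimpleGraph.mem_edgeSet] at hfne
      rw [if_pos hadj] at hfne
      exact hfne rfl
    · -- color 2 : non-edges of G
      simp only [Matrix.cons_val_two, Matrix.tail_cons, Matrix.head_cons] at hcard
      refine hG.1 s ⟨?_, hcard⟩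
      intro x hx y hy hxy
      by_contra hg
      have hh : ¬ H.Adj x y := fun hh' => hg (hHG hh')
      have hfne := hind x hx y hy hxy
      simp only [SimpleGraph.mem_edgeSet] at hfne
      rw [if_neg hh, if_neg hg] at hfne
      exact hfne rfl
  · -- graph statement → colorings
    intro hgr f
    by_contra hcon
    push_neg at hcon
    simp only [HasIndep, not_exists, not_and] at hcon
    push_neg at hcon
    have hcon' : ∀ (i : Fin 3) (s : Finset (Fin n)), s.card = ![m₁, m₂, m₃] i →
        ∃ x ∈ s, ∃ y ∈ s, x ≠ y ∧ f s(x, y) = i := hcon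
    have hle : colorGraph f 1 ≤ (colorGraph f 2)ᶜ := by
      intro x y hxy
      exact ⟨hxy.1, fun hc => absurd (hxy.2.symm.trans hc.2) (by decide)⟩
    have hG : IsRamseyGraph m₃ m₂ ((colorGraph f 2)ᶜ) := by
      constructor
      · intro t ht
        obtain ⟨x, hx, y, hy, hxy, hf⟩ := hcon' 2 t (by simpa using ht.2)
        exact (ht.1 hx hy hxy).2 ⟨hxy, hf⟩
      · intro t ht
        obtain ⟨x, hx, y, hy, hxy, hf⟩ := hcon' 1 t (by simpa using ht.2)
        have hadj := ht.1 hx hy hxy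
        rw [compl_compl] at hadj
        rw [hadj.2] at hf
        exact absurd hf (by decide)
    have hH : IsRamseyGraph m₃ m₂ (colorGraph f 1) := by
      constructor
      · intro t ht
        obtain ⟨x, hx, y, hy, hxy, hf⟩ := hcon' 2 t (by simpa using ht.2)
        have hadj := ht.1 hx hy hxy
        rw [hadj.2] at hf
        exact absurd hf (by decide)
      · intro t ht
        obtain ⟨x, hx, y, hy, hxy, hf⟩ := hcon' 1 t (by simpa using ht.2)
        exact (ht.1 hx hy hxy).2 ⟨hxy, hf⟩
    obtain ⟨s, hcard, hind⟩ := hgr ((colorGraph f 2)ᶜ) (colorGraph f 1) hle hG hH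
    obtain ⟨x, hx, y, hy, hxy, hf0⟩ := hcon' 0 s (by simpa using hcard)
    refine hind x hx y hy hxy ?_
    rw [SimpleGraph.sdiff_adj]
    exact ⟨⟨hxy, fun hc => absurd (hf0.symm.trans hc.2) (by decide)⟩,
      fun hc => absurd (hf0.symm.trans hc.2) (by decide)⟩
end

section
/- Let k, m, n be positive integers with m ≥ 3, and suppose k · t̄_{m−1}(n) > n(n−1)/2. Then R̄(m;k) ≤ n. -/
open Finset

section Aux
open SimpleGraph

lemma two_mul_choose_two (a : ℕ) : 2 * a.choose 2 = a * (a - 1) := by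
  cases a with
  | zero => simp
  | succ b =>
    rw [Nat.choose_two_right, Nat.succ_sub_one]
    refine Nat.mul_div_cancel' ?_
    rw [mul_comm]
    exact (Nat.even_mul_succ_self b).two_dvd

lemma count_mod (s : ℕ) (hs : 0 < s) (n j : ℕ) (hj : j < s) :
    #((range n).filter (fun v => v % s = j)) = n / s + if j < n % s then 1 else 0 := by
  induction n with
  | zero => simp [Nat.zero_div, Nat.zero_mod]
  | succ n ih =>
    have hlt : n % s < s := Nat.mod_lt n hs
    have hdm := Nat.div_add_mod n s
    have hsucc : ((n+1) / s = n / s + 1 ∧ (n+1) % s = 0 ∧ n % s + 1 = s) ∨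
        ((n+1) / s = n / s ∧ (n+1) % s = n % s + 1) := by
      by_cases hc : n % s + 1 = s
      · left
        have hn1 : n + 1 = s * (n / s + 1) := by rw [Nat.mul_add, Nat.mul_one]; omega
        refine ⟨?_, ?_, hc⟩
        · rw [hn1, Nat.mul_div_cancel_left _ hs]
        · rw [hn1, Nat.mul_mod_right]
      · right
        have hmc : (n / s) * s = s * (n / s) := Nat.mul_comm _ _
        have hn1 : n + 1 = (n % s + 1) + (n / s) * s := by omega
        constructor
        · rw [hn1, Nat.add_mul_div_right _ _ hs, Nat.div_eq_of_lt (by omega)]; omega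
        · rw [hn1, Nat.add_mul_mod_self_right, Nat.mod_eq_of_lt (by omega)]
    rw [Finset.range_add_one, Finset.filter_insert]
    by_cases hc : n % s = j
    · rw [if_pos hc, Finset.card_insert_of_notMem (by simp), ih,
        if_neg (show ¬ j < n % s by omega)]
      rcases hsucc with ⟨h1, h2, h3⟩ | ⟨h1, h2⟩ <;> rw [h1, h2]
      · rw [if_neg (Nat.not_lt_zero j)]
      · rw [if_pos (by omega)]
    · rw [if_neg hc, ih]
      rcases hsucc with ⟨h1, h2, h3⟩ | ⟨h1, h2⟩ <;> rw [h1, h2]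
      · rw [if_pos (show j < n % s by omega), if_neg (Nat.not_lt_zero j)]
      · have he : (if j < n % s + 1 then 1 else 0 : ℕ) = (if j < n % s then 1 else 0) := by
          split_ifs <;> omega
        rw [he]

lemma c_fin (n s j : ℕ) :
    #(univ.filter fun v : Fin n => (v : ℕ) % s = j) = #((range n).filter (fun v => v % s = j)) := by
  rw [Finset.card_filter, Finset.card_filter,
    Fin.sum_univ_eq_sum_range (fun i => if i % s = j then 1 else 0)]

lemma tbar_arith (s q r t : ℕ) (hst : s = r + t) :
    2 * (r * (q+1).choose 2 + t * q.choose 2) + (s * q + r) = r * ((q+1)*(q+1)) + t * (q*q) := by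
  subst hst
  have e1 := two_mul_choose_two (q+1)
  have e2 := two_mul_choose_two q
  rw [Nat.mul_add, ← Nat.mul_assoc, ← Nat.mul_assoc, Nat.mul_comm 2 r, Nat.mul_comm 2 t,
    Nat.mul_assoc, Nat.mul_assoc, e1, e2]
  cases q with
  | zero => simp
  | succ p =>
    rw [show p + 1 + 1 - 1 = p + 1 from rfl, show p + 1 - 1 = p from rfl]
    ring

lemma turan_compl_card (n s : ℕ) (hs : 0 < s) :
    #((turanGraph n s)ᶜ.edgeFinset) = tbar s n := by
  classical
  set q := n / s with hq
  set r := n % s with hr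
  have hrs : r < s := Nat.mod_lt n hs
  have hdm : s * q + r = n := Nat.div_add_mod n s
  set c : ℕ → ℕ := fun j => #(univ.filter fun v : Fin n => (v : ℕ) % s = j) with hcdef
  have hadj : ∀ v w : Fin n, (turanGraph n s)ᶜ.Adj v w ↔ v ≠ w ∧ (v:ℕ) % s = (w:ℕ) % s := by
    intro v w
    rw [compl_adj]
    constructor
    · rintro ⟨h1, h2⟩
      exact ⟨h1, by simpa [turanGraph] using h2⟩
    · rintro ⟨h1, h2⟩
      exact ⟨h1, by simp [turanGraph, h2]⟩
  have hdeg : ∀ v : Fin n, (turanGraph n s)ᶜ.degree v + 1 = c ((v:ℕ) % s) := by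
    intro v
    rw [degree, neighborFinset_eq_filter]
    have hfe : univ.filter ((turanGraph n s)ᶜ.Adj v) =
        (univ.filter fun w : Fin n => (w:ℕ) % s = (v:ℕ) % s).erase v := by
      ext w
      simp only [mem_filter, mem_univ, true_and, mem_erase, hadj]
      constructor
      · rintro ⟨h1, h2⟩; exact ⟨h1.symm, h2.symm⟩
      · rintro ⟨h1, h2⟩; exact ⟨Ne.symm h1, h2.symm⟩
    have hceq : c ((v:ℕ) % s) = #(univ.filter fun w : Fin n => (w:ℕ) % s = (v:ℕ) % s) := rfl
    have hmem : v ∈ univ.filter fun w : Fin n => (w:ℕ) % s = (v:ℕ) % s := by simp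
    have hpos : 0 < #(univ.filter fun w : Fin n => (w:ℕ) % s = (v:ℕ) % s) :=
      card_pos.mpr ⟨v, hmem⟩
    rw [hfe, card_erase_of_mem hmem, hceq]
    omega
  have hsum1 : ∑ v : Fin n, ((turanGraph n s)ᶜ.degree v + 1) = ∑ v : Fin n, c ((v:ℕ) % s) :=
    Finset.sum_congr rfl fun v _ => hdeg v
  have hfiber : ∑ v : Fin n, c ((v:ℕ) % s) = ∑ j ∈ range s, c j * c j := by
    rw [← Finset.sum_fiberwise_of_maps_to (g := fun v : Fin n => (v:ℕ) % s) (t := range s)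
      (fun v _ => mem_range.mpr (Nat.mod_lt _ hs))]
    refine Finset.sum_congr rfl fun j hj => ?_
    rw [Finset.sum_congr rfl (fun v hv => by
      rw [(mem_filter.mp hv).2]), Finset.sum_const, smul_eq_mul]
  have hc : ∀ j < s, c j = q + if j < r then 1 else 0 := fun j hj =>
    (c_fin n s j).trans (count_mod s hs n j hj)
  have hval : ∑ j ∈ range s, c j * c j = r * ((q+1) * (q+1)) + (s - r) * (q * q) := by
    have h1 : ∑ j ∈ range s, c j * c j =
        ∑ j ∈ range s, (if j < r then (q+1)*(q+1) else q*q) := by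
      refine Finset.sum_congr rfl fun j hj => ?_
      rw [hc j (mem_range.mp hj)]
      split_ifs <;> ring
    rw [h1, Finset.sum_ite, Finset.sum_const, Finset.sum_const, smul_eq_mul, smul_eq_mul]
    have h2 : (range s).filter (fun j => j < r) = range r := by
      ext j; simp only [mem_filter, mem_range]; omega
    have h4 : (range s).filter (fun j => ¬ j < r) = Ico r s := by
      ext j; simp only [mem_filter, mem_range, mem_Ico]; omega
    rw [h2, h4, card_range, Nat.card_Ico]
  have hdsum := SimpleGraph.sum_degrees_eq_twice_card_edges ((turanGraph n s)ᶜ)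
  have hL : ∑ v : Fin n, ((turanGraph n s)ᶜ.degree v + 1) =
      2 * #((turanGraph n s)ᶜ.edgeFinset) + n := by
    rw [Finset.sum_add_distrib, hdsum, Finset.sum_const, card_univ, Fintype.card_fin,
      smul_eq_mul, mul_one]
  have key : 2 * #((turanGraph n s)ᶜ.edgeFinset) + n = r * ((q+1)*(q+1)) + (s-r) * (q*q) := by
    rw [← hL, hsum1, hfiber, hval]
  have htb : 2 * tbar s n + n = r * ((q+1)*(q+1)) + (s-r) * (q*q) := by
    show 2 * (n % s * (n / s + 1).choose 2 + (s - n % s) * (n / s).choose 2) + n = _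
    rw [← hq, ← hr, ← hdm]
    exact tbar_arith s q r (s - r) (by omega)
  omega

lemma card_edgeFinset_add_compl {n : ℕ} (G : SimpleGraph (Fin n)) [DecidableRel G.Adj] :
    #(G.edgeFinset) + #(Gᶜ.edgeFinset) = n.choose 2 := by
  classical
  have hdisj : Disjoint G.edgeFinset Gᶜ.edgeFinset :=
    disjoint_edgeFinset.mpr disjoint_compl_right
  have hun : G.edgeFinset ∪ Gᶜ.edgeFinset = (⊤ : SimpleGraph (Fin n)).edgeFinset := by
    ext e
    induction e using Sym2.ind with
    | _ x y =>
      simp only [mem_union, mem_edgeFinset, mem_edgeSet, compl_adj, top_adj]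
      have hne : G.Adj x y → x ≠ y := G.ne_of_adj
      tauto
  rw [← card_union_of_disjoint hdisj, hun, card_edgeFinset_top_eq_card_choose_two,
    Fintype.card_fin]

lemma edge_lower_bound {n m : ℕ} (hm : 3 ≤ m) (G : SimpleGraph (Fin n)) [DecidableRel G.Adj]
    (hcf : Gᶜ.CliqueFree m) : tbar (m - 1) n ≤ #G.edgeFinset := by
  classical
  have h1 : 0 < m - 1 := by omega
  have hT := isTuranMaximal_turanGraph (n := n) h1
  have h2 : Gᶜ.CliqueFree (m - 1 + 1) := by rwa [Nat.sub_add_cancel (by omega)]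
  have h3 := hT.2 (G' := Gᶜ) h2
  have h4 := card_edgeFinset_add_compl G
  have h5 := card_edgeFinset_add_compl (turanGraph n (m - 1))
  have h6 := turan_compl_card n (m - 1) h1
  omega

end Aux

instance colorGraph.instDecidableRelAdj {n k : ℕ} (f : Sym2 (Fin n) → Fin k) (i : Fin k) :
    DecidableRel (colorGraph f i).Adj :=
  fun x y => inferInstanceAs (Decidable (x ≠ y ∧ f s(x, y) = i))

/-- If `k * t̄_{m-1}(n) > n(n-1)/2`, then `R̄(m; k) ≤ n`. -/
theorem cRamseyU_le_of_tbar (k m n : ℕ) (hk : 0 < k) (hm : 3 ≤ m) (hn : 0 < n)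
    (h : n.choose 2 < k * tbar (m - 1) n) :
    cRamseyU m k ≤ n := by
  apply Nat.sInf_le
  intro f
  by_contra hcon
  push_neg at hcon
  have hcf : ∀ i : Fin k, (colorGraph f i)ᶜ.CliqueFree m := by
    intro i s hs
    refine hcon i ⟨s, hs.2, fun x hx y hy hxy => ?_⟩
    have hadj := hs.1 (Finset.mem_coe.mpr hx) (Finset.mem_coe.mpr hy) hxy
    rw [SimpleGraph.compl_adj] at hadj
    intro hfeq
    exact hadj.2 ⟨hxy, hfeq⟩
  have key : ∀ i : Fin k, tbar (m - 1) n ≤ #(colorGraph f i).edgeFinset := fun i =>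
    edge_lower_bound hm _ (hcf i)
  have hd : ∀ i ∈ (univ : Finset (Fin k)), ∀ j ∈ (univ : Finset (Fin k)), i ≠ j →
      Disjoint (colorGraph f i).edgeFinset (colorGraph f j).edgeFinset := by
    intro i _ j _ hij
    refine SimpleGraph.disjoint_edgeFinset.mpr (disjoint_iff.mpr ?_)
    ext x y
    simp only [SimpleGraph.inf_adj, SimpleGraph.bot_adj, iff_false, not_and]
    rintro ⟨-, h1⟩ ⟨-, h2⟩
    exact hij (h1 ▸ h2 ▸ rfl)
  have hsum : ∑ i : Fin k, #(colorGraph f i).edgeFinset ≤ n.choose 2 := by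
    rw [← Finset.card_biUnion hd]
    refine le_trans (Finset.card_le_card (Finset.biUnion_subset.mpr fun i _ =>
      SimpleGraph.edgeFinset_subset_edgeFinset.mpr le_top)) ?_
    rw [SimpleGraph.card_edgeFinset_top_eq_card_choose_two, Fintype.card_fin]
  have hks : k * tbar (m - 1) n ≤ ∑ i : Fin k, #(colorGraph f i).edgeFinset := by
    calc k * tbar (m - 1) n = ∑ _i : Fin k, tbar (m - 1) n := by
          rw [Finset.sum_const, card_univ, Fintype.card_fin, smul_eq_mul]
        _ ≤ _ := Finset.sum_le_sum fun i _ => key i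
  omega
end

section
/- For every integer n ≥ 2, R̄(n+1; 2n−1) = 2n+1, where the first argument n+1 is repeated 2n−1 times. -/
open Finset

section Aux

/-- The round-robin color function on `Fin (2n)`: vertex `2n-1` is the "infinity"
vertex, other vertices live on `ZMod (2n-1)`. -/
private def rrColor (n : ℕ) (h : 0 < 2*n-1) : Fin (2*n) → Fin (2*n) → Fin (2*n-1) :=
  fun x y =>
    ⟨(if (x:ℕ) = 2*n-1 then 2*(y:ℕ) else if (y:ℕ) = 2*n-1 then 2*(x:ℕ) else (x:ℕ)+(y:ℕ))
        % (2*n-1),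
      Nat.mod_lt _ h⟩

private lemma rrColor_symm (n : ℕ) (h : 0 < 2*n-1) :
    ∀ x y, rrColor n h x y = rrColor n h y x := by
  intro x y
  apply Fin.ext
  by_cases hx : (x:ℕ) = 2*n-1 <;> by_cases hy : (y:ℕ) = 2*n-1 <;>
    simp [rrColor, hx, hy, Nat.add_comm]

/-- The matching partner function for color `i`. -/
private noncomputable def rrMu (n : ℕ) (i : ℕ) [NeZero (2*n-1)] (h : 2*n-1 < 2*n) :
    Fin (2*n) → Fin (2*n) := fun x =>
  if (x:ℕ) = 2*n-1 then
    ⟨((n : ZMod (2*n-1)) * (i : ZMod (2*n-1))).val, (ZMod.val_lt _).trans h⟩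
  else if ((x:ℕ) : ZMod (2*n-1)) + ((x:ℕ) : ZMod (2*n-1)) = (i : ZMod (2*n-1)) then
    ⟨2*n-1, h⟩
  else
    ⟨((i : ZMod (2*n-1)) - ((x:ℕ) : ZMod (2*n-1))).val, (ZMod.val_lt _).trans h⟩

private lemma fin_val_mk {n a : ℕ} (h : a < n) : ((⟨a, h⟩ : Fin n) : ℕ) = a := rfl

private lemma lower_exists (n : ℕ) (hn : 2 ≤ n) :
    ∃ f : Sym2 (Fin (2*n)) → Fin (2*n-1), ∀ i : Fin (2*n-1), ¬ HasIndep f i (n+1) := by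
  have hM : 0 < 2*n-1 := by omega
  have hM2 : 2*n-1 < 2*n := by omega
  haveI : NeZero (2*n-1) := ⟨by omega⟩
  have key' : (n : ZMod (2*n-1)) + (n : ZMod (2*n-1)) = 1 := by
    have h1 : (n + n : ℕ) = (2*n-1) + 1 := by omega
    calc (n : ZMod (2*n-1)) + n = ((n+n : ℕ) : ZMod (2*n-1)) := by push_cast; ring
    _ = (((2*n-1) + 1 : ℕ) : ZMod (2*n-1)) := by rw [h1]
    _ = 1 := by rw [Nat.cast_add, Nat.cast_one, ZMod.natCast_self, zero_add]
  have castval : ∀ a : ZMod (2*n-1), ((a.val : ℕ) : ZMod (2*n-1)) = a :=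
    fun a => ZMod.natCast_rightInverse a
  refine ⟨Sym2.lift ⟨rrColor n hM, rrColor_symm n hM⟩, ?_⟩
  rintro i ⟨s, hcard, hind⟩
  have hf : ∀ x y : Fin (2*n),
      Sym2.lift ⟨rrColor n hM, rrColor_symm n hM⟩ s(x,y) = rrColor n hM x y :=
    fun x y => Sym2.lift_mk _ x y
  have hti : (((i:ℕ) : ZMod (2*n-1))).val = (i:ℕ) := ZMod.val_cast_of_lt i.isLt
  set μ := rrMu n (i:ℕ) hM2 with hμdef
  have two_val : ∀ a : ZMod (2*n-1), (2 * a.val) % (2*n-1) = (a + a).val := by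
    intro a
    rw [ZMod.val_add]
    congr 1
    omega
  have main : ∀ x : Fin (2*n), μ x ≠ x ∧
      Sym2.lift ⟨rrColor n hM, rrColor_symm n hM⟩ s(x, μ x) = i ∧ μ (μ x) = x := by
    intro x
    by_cases hx : (x:ℕ) = 2*n-1
    · -- Case A : x is the infinity vertex
      have hμx : μ x = ⟨((n : ZMod (2*n-1)) * ((i:ℕ) : ZMod (2*n-1))).val,
          (ZMod.val_lt _).trans hM2⟩ := by
        rw [hμdef]; unfold rrMu; rw [if_pos hx]
      have hid : (n : ZMod (2*n-1)) * ((i:ℕ) : ZMod (2*n-1))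
          + (n : ZMod (2*n-1)) * ((i:ℕ) : ZMod (2*n-1)) = ((i:ℕ) : ZMod (2*n-1)) := by
        linear_combination ((i:ℕ) : ZMod (2*n-1)) * key'
      refine ⟨?_, ?_, ?_⟩
      · intro hcon
        have hv := congrArg Fin.val hcon
        rw [hμx, fin_val_mk] at hv
        have := ZMod.val_lt ((n : ZMod (2*n-1)) * ((i:ℕ) : ZMod (2*n-1)))
        omega
      · rw [hμx, hf]
        apply Fin.ext
        simp only [rrColor, fin_val_mk]
        rw [if_pos hx, two_val, hid, hti]
      · rw [hμx, hμdef]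
        unfold rrMu
        simp only [fin_val_mk]
        have hc : ((((n : ZMod (2*n-1)) * ((i:ℕ) : ZMod (2*n-1))).val : ℕ) : ZMod (2*n-1))
            + ((((n : ZMod (2*n-1)) * ((i:ℕ) : ZMod (2*n-1))).val : ℕ) : ZMod (2*n-1))
            = ((i:ℕ) : ZMod (2*n-1)) := by
          rw [castval]; exact hid
        rw [if_neg (Nat.ne_of_lt (ZMod.val_lt _)), if_pos hc]
        apply Fin.ext
        rw [fin_val_mk]
        exact hx.symm
    · have hxlt : (x:ℕ) < 2*n-1 := by have := x.isLt; omega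
      have hax : (((x:ℕ) : ZMod (2*n-1))).val = (x:ℕ) := ZMod.val_cast_of_lt hxlt
      by_cases hx2 : ((x:ℕ) : ZMod (2*n-1)) + ((x:ℕ) : ZMod (2*n-1)) = ((i:ℕ) : ZMod (2*n-1))
      · -- Case B : x is matched to infinity
        have hμx : μ x = ⟨2*n-1, hM2⟩ := by
          rw [hμdef]; unfold rrMu; rw [if_neg hx, if_pos hx2]
        refine ⟨?_, ?_, ?_⟩
        · intro hcon
          have hv := congrArg Fin.val hcon
          rw [hμx, fin_val_mk] at hv
          omega
        · rw [hμx, hf]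
          apply Fin.ext
          simp only [rrColor, fin_val_mk]
          rw [if_neg hx]
          simp only [if_true]
          have h2 : 2 * (x:ℕ) % (2*n-1)
              = (((x:ℕ) : ZMod (2*n-1)) + ((x:ℕ) : ZMod (2*n-1))).val := by
            conv_lhs => rw [← hax]
            exact two_val _
          rw [h2, hx2, hti]
        · rw [hμx, hμdef]
          unfold rrMu
          simp only [fin_val_mk, if_true]
          apply Fin.ext
          rw [fin_val_mk]
          have h5 : (n : ZMod (2*n-1)) * ((i:ℕ) : ZMod (2*n-1)) = ((x:ℕ) : ZMod (2*n-1)) := by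
            rw [← hx2]; linear_combination ((x:ℕ) : ZMod (2*n-1)) * key'
          rw [h5, hax]
      · -- Case C : x is matched to i - x
        have hμx : μ x = ⟨(((i:ℕ) : ZMod (2*n-1)) - ((x:ℕ) : ZMod (2*n-1))).val,
            (ZMod.val_lt _).trans hM2⟩ := by
          rw [hμdef]; unfold rrMu; rw [if_neg hx, if_neg hx2]
        refine ⟨?_, ?_, ?_⟩
        · intro hcon
          have hv := congrArg Fin.val hcon
          rw [hμx, fin_val_mk] at hv
          apply hx2
          have h6 : ((i:ℕ) : ZMod (2*n-1)) - ((x:ℕ) : ZMod (2*n-1))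
              = ((x:ℕ) : ZMod (2*n-1)) := by
            apply ZMod.val_injective
            rw [hv, hax]
          linear_combination - h6
        · rw [hμx, hf]
          apply Fin.ext
          simp only [rrColor, fin_val_mk]
          have hlt : (((i:ℕ) : ZMod (2*n-1)) - ((x:ℕ) : ZMod (2*n-1))).val < 2*n-1 :=
            ZMod.val_lt _
          rw [if_neg hx, if_neg (Nat.ne_of_lt hlt)]
          have h1 : (x:ℕ) + (((i:ℕ) : ZMod (2*n-1)) - ((x:ℕ) : ZMod (2*n-1))).val
              = (((x:ℕ) : ZMod (2*n-1))).val
                + (((i:ℕ) : ZMod (2*n-1)) - ((x:ℕ) : ZMod (2*n-1))).val := by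
            rw [hax]
          have h7 : ((x:ℕ) : ZMod (2*n-1))
              + (((i:ℕ) : ZMod (2*n-1)) - ((x:ℕ) : ZMod (2*n-1))) = ((i:ℕ) : ZMod (2*n-1)) := by
            ring
          rw [h1, ← ZMod.val_add, h7, hti]
        · rw [hμx, hμdef]
          unfold rrMu
          simp only [fin_val_mk]
          have hc2 : ¬ (((((i:ℕ) : ZMod (2*n-1)) - ((x:ℕ) : ZMod (2*n-1))).val : ℕ) : ZMod (2*n-1))
              + (((((i:ℕ) : ZMod (2*n-1)) - ((x:ℕ) : ZMod (2*n-1))).val : ℕ) : ZMod (2*n-1))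
              = ((i:ℕ) : ZMod (2*n-1)) := by
            rw [castval]
            intro hcon
            apply hx2
            linear_combination - hcon
          rw [if_neg (Nat.ne_of_lt (ZMod.val_lt _)), if_neg hc2]
          apply Fin.ext
          rw [fin_val_mk, castval]
          have h8 : ((i:ℕ) : ZMod (2*n-1))
              - (((i:ℕ) : ZMod (2*n-1)) - ((x:ℕ) : ZMod (2*n-1))) = ((x:ℕ) : ZMod (2*n-1)) := by
            ring
          rw [h8, hax]
  have hinj : Function.Injective μ := Function.Involutive.injective (fun x => (main x).2.2)
  have hdisj : Disjoint s (s.image μ) := by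
    rw [Finset.disjoint_right]
    rintro z hz hzs
    obtain ⟨x, hxs, rfl⟩ := Finset.mem_image.1 hz
    exact hind x hxs (μ x) hzs (Ne.symm (main x).1) (main x).2.1
  have hcards : (s ∪ s.image μ).card = 2*(n+1) := by
    rw [Finset.card_union_of_disjoint hdisj, Finset.card_image_of_injective _ hinj, hcard]
    ring
  have hle : (s ∪ s.image μ).card ≤ 2*n := by
    have := Finset.card_le_univ (s ∪ s.image μ)
    simpa using this
  omega

private lemma upper_mem (n : ℕ) (hn : 2 ≤ n) :
    ∀ f : Sym2 (Fin (2*n+1)) → Fin (2*n-1), ∃ i : Fin (2*n-1), HasIndep f i (n+1) := by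
  intro f
  by_contra hcon
  push_neg at hcon
  classical
  set ED : Finset (Sym2 (Fin (2*n+1))) := Finset.univ.filter (fun e => ¬ e.IsDiag) with hED
  set E : Fin (2*n-1) → Finset (Sym2 (Fin (2*n+1))) :=
    fun i => ED.filter (fun e => f e = i) with hE
  have hsum : ED.card = ∑ i : Fin (2*n-1), (E i).card :=
    Finset.card_eq_sum_card_fiberwise (fun e _ => Finset.mem_univ (f e))
  have hEDcard : ED.card = Nat.choose (2*n+1) 2 := by
    have h1 := Sym2.card_subtype_not_diag (α := Fin (2*n+1))
    rw [Fintype.card_subtype] at h1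
    rw [hED, h1, Fintype.card_fin]
  have hlow : ∀ i, n + 2 ≤ (E i).card := by
    intro i
    have hi := hcon i
    have hind_card : ∀ s : Finset (Fin (2*n+1)),
        (∀ x ∈ s, ∀ y ∈ s, x ≠ y → f s(x,y) ≠ i) → s.card ≤ n := by
      intro s hs
      by_contra h
      push_neg at h
      obtain ⟨s', hs', hcard'⟩ := Finset.exists_subset_card_eq (Nat.succ_le_of_lt h)
      exact hi ⟨s', hcard', fun x hx y hy => hs x (hs' hx) y (hs' hy)⟩
    set P : Finset (Fin (2*n+1)) → Prop :=
      fun s => ∀ x ∈ s, ∀ y ∈ s, x ≠ y → f s(x,y) ≠ i with hP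
    obtain ⟨S, hSmem, hSmax⟩ := Finset.exists_max_image
      ((Finset.univ : Finset (Finset (Fin (2*n+1)))).filter P) Finset.card
      ⟨∅, Finset.mem_filter.2 ⟨Finset.mem_univ _, by intro x hx; simp at hx⟩⟩
    have hSP : P S := (Finset.mem_filter.1 hSmem).2
    have hSn : S.card ≤ n := hind_card S hSP
    set T : Finset (Fin (2*n+1)) := Finset.univ \ S with hT
    have hTcard : n+1 ≤ T.card := by
      rw [hT, Finset.card_sdiff_of_subset (Finset.subset_univ S)]
      simp only [Finset.card_univ, Fintype.card_fin]
      omega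
    have hTS : ∀ x ∈ T, x ∉ S := fun x hx => (Finset.mem_sdiff.1 hx).2
    have hmax : ∀ v ∈ T, ∃ u ∈ S, f s(v,u) = i := by
      intro v hv
      by_contra h
      push_neg at h
      have hvS := hTS v hv
      have hPins : P (insert v S) := by
        intro x hx y hy hxy
        rcases Finset.mem_insert.1 hx with rfl | hx'
        · rcases Finset.mem_insert.1 hy with rfl | hy'
          · exact absurd rfl hxy
          · exact h y hy'
        · rcases Finset.mem_insert.1 hy with rfl | hy'
          · rw [Sym2.eq_swap]; exact h x hx'
          · exact hSP x hx' y hy' hxy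
      have := hSmax _ (Finset.mem_filter.2 ⟨Finset.mem_univ _, hPins⟩)
      rw [Finset.card_insert_of_notMem hvS] at this
      omega
    have hTnP : ¬ P T := by
      intro h
      have := hind_card T h
      omega
    have hedge : ∃ v ∈ T, ∃ w ∈ T, v ≠ w ∧ f s(v,w) = i := by
      by_contra h
      push_neg at h
      exact hTnP (fun x hx y hy hxy => h x hx y hy hxy)
    obtain ⟨v, hv, w, hw, hvw, hfvw⟩ := hedge
    choose g hg1 hg2 using hmax
    set e : Fin (2*n+1) → Sym2 (Fin (2*n+1)) :=
      fun u => if h : u ∈ T then s(u, g u h) else s(v,w) with he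
    have hvwE : s(v,w) ∈ E i := by
      rw [hE]
      refine Finset.mem_filter.2 ⟨Finset.mem_filter.2 ⟨Finset.mem_univ _, ?_⟩, hfvw⟩
      rw [Sym2.mk_isDiag_iff]
      exact hvw
    have hmaps : ∀ u ∈ T, e u ∈ (E i).erase s(v,w) := by
      intro u hu
      rw [he]
      simp only [dif_pos hu]
      refine Finset.mem_erase.2 ⟨?_, ?_⟩
      · intro h
        rw [Sym2.eq_iff] at h
        rcases h with ⟨rfl, rfl⟩ | ⟨rfl, rfl⟩
        · exact hTS _ hw (hg1 u hu)
        · exact hTS _ hv (hg1 u hu)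
      · rw [hE]
        refine Finset.mem_filter.2 ⟨Finset.mem_filter.2 ⟨Finset.mem_univ _, ?_⟩, hg2 u hu⟩
        rw [Sym2.mk_isDiag_iff]
        intro hcon
        exact hTS u hu (hcon ▸ hg1 u hu)
    have hinjOn : Set.InjOn e T := by
      intro a ha b hb hab
      rw [Finset.mem_coe] at ha hb
      rw [he] at hab
      simp only [dif_pos ha, dif_pos hb] at hab
      rw [Sym2.eq_iff] at hab
      rcases hab with ⟨h1, _⟩ | ⟨h1, h2⟩
      · exact h1
      · exact absurd (h1 ▸ hg1 b hb) (hTS a ha)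
    have hle := Finset.card_le_card_of_injOn e hmaps hinjOn
    rw [Finset.card_erase_of_mem hvwE] at hle
    have hpos : 0 < (E i).card := Finset.card_pos.2 ⟨_, hvwE⟩
    omega
  have hge : (2*n-1) * (n+2) ≤ ∑ i : Fin (2*n-1), (E i).card := by
    calc (2*n-1)*(n+2) = ∑ _i : Fin (2*n-1), (n+2) := by
          simp [Finset.sum_const, Finset.card_univ]
    _ ≤ ∑ i : Fin (2*n-1), (E i).card := Finset.sum_le_sum (fun i _ => hlow i)
  have hch : Nat.choose (2*n+1) 2 = n*(2*n+1) := by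
    rw [Nat.choose_two_right]
    have h1 : (2*n+1) - 1 = 2*n := by omega
    rw [h1]
    have h2 : (2*n+1)*(2*n) = (n*(2*n+1))*2 := by ring
    rw [h2, Nat.mul_div_cancel _ (by norm_num)]
  rw [← hsum, hEDcard, hch] at hge
  obtain ⟨k, rfl⟩ : ∃ k, n = k + 2 := ⟨n-2, by omega⟩
  have h3 : 2*(k+2)-1 = 2*k+3 := by omega
  rw [h3] at hge
  nlinarith [hge]

end Aux

/-- For every integer `n ≥ 2`, `R̄(n + 1; 2n - 1) = 2n + 1`. -/
theorem cRamseyU_one_factorization (n : ℕ) (hn : 2 ≤ n) :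
    cRamseyU (n + 1) (2 * n - 1) = 2 * n + 1 := by
  have hmem : (2*n+1) ∈ {N : ℕ | ∀ f : Sym2 (Fin N) → Fin (2*n-1),
      ∃ i : Fin (2*n-1), HasIndep f i ((fun _ : Fin (2*n-1) => n+1) i)} := upper_mem n hn
  unfold cRamseyU cRamsey
  apply le_antisymm
  · exact Nat.sInf_le hmem
  · obtain ⟨f0, hf0⟩ := lower_exists n hn
    refine le_csInf ⟨_, hmem⟩ ?_
    intro m hm
    by_contra hlt
    push_neg at hlt
    have hm2n : m ≤ 2*n := by omega
    obtain ⟨i, s, hcard, hind⟩ := hm (fun e => f0 (e.map (Fin.castLE hm2n)))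
    apply hf0 i
    refine ⟨s.image (Fin.castLE hm2n), ?_, ?_⟩
    · rw [Finset.card_image_of_injective _ (Fin.castLE_injective hm2n), hcard]
    · intro x hx y hy hxy
      obtain ⟨x', hx', rfl⟩ := Finset.mem_image.1 hx
      obtain ⟨y', hy', rfl⟩ := Finset.mem_image.1 hy
      have hxy' : x' ≠ y' := fun h => hxy (by rw [h])
      have := hind x' hx' y' hy' hxy'
      simpa [Sym2.map_pair_eq] using this
end

section
/- The following values of complementary Ramsey numbers hold: R̄(4;6) = 5; R̄(5;k) = 6 for every integer k with 8 ≤ k ≤ 10; R̄(6;8) = 11; R̄(6;10) = 8; and R̄(6;k) = 7 for every integer k with 11 ≤ k ≤ 15. -/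
open Finset

section Machinery

variable {n k : ℕ}

/-- ordered pairs of distinct vertices of `s` joined by color `i`. -/
def Dc (f : Sym2 (Fin n) → Fin k) (i : Fin k) (s : Finset (Fin n)) : ℕ :=
  ((s ×ˢ s).filter (fun p => p.2 ≠ p.1 ∧ f s(p.1, p.2) = i)).card

lemma cover (f : Sym2 (Fin n) → Fin k) (i : Fin k) :
    ∀ (m : ℕ) (s : Finset (Fin n)), Dc f i s ≤ 2*m+1 →
      ∃ t ⊆ s, (∀ x ∈ t, ∀ y ∈ t, x ≠ y → f s(x, y) ≠ i) ∧ s.card ≤ t.card + m := by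
  intro m
  induction m with
  | zero =>
    intro s hs
    refine ⟨s, Finset.Subset.refl s, ?_, by omega⟩
    intro x hx y hy hxy hf
    have h1 : (x, y) ∈ (s ×ˢ s).filter (fun p => p.2 ≠ p.1 ∧ f s(p.1, p.2) = i) := by
      simp [Finset.mem_filter, Finset.mem_product, hx, hy, hxy.symm, hf]
    have h2 : (y, x) ∈ (s ×ˢ s).filter (fun p => p.2 ≠ p.1 ∧ f s(p.1, p.2) = i) := by
      have : f s(y, x) = i := by rwa [Sym2.eq_swap]
      simp [Finset.mem_filter, Finset.mem_product, hx, hy, hxy, this]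
    have : 1 < Dc f i s := Finset.one_lt_card.mpr ⟨_, h1, _, h2, by simp [Prod.ext_iff, hxy]⟩
    omega
  | succ m ih =>
    intro s hs
    by_cases h : Dc f i s ≤ 2*m+1
    · obtain ⟨t, ht, hind, hc⟩ := ih s h
      exact ⟨t, ht, hind, by omega⟩
    · have hpos : 0 < Dc f i s := by omega
      obtain ⟨⟨a, b⟩, hab⟩ := Finset.card_pos.mp hpos
      rw [Finset.mem_filter, Finset.mem_product] at hab
      obtain ⟨⟨has, hbs⟩, hba, hfab⟩ := hab
      have key : Dc f i (s.erase a) + 2 ≤ Dc f i s := by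
        have hsub : insert ((a,b) : Fin n × Fin n) (insert (b,a)
            (((s.erase a) ×ˢ (s.erase a)).filter (fun p => p.2 ≠ p.1 ∧ f s(p.1, p.2) = i)))
            ⊆ (s ×ˢ s).filter (fun p => p.2 ≠ p.1 ∧ f s(p.1, p.2) = i) := by
          intro p hp
          rcases Finset.mem_insert.mp hp with rfl | hp
          · simp [Finset.mem_filter, Finset.mem_product, has, hbs, hba, hfab]
          rcases Finset.mem_insert.mp hp with rfl | hp
          · have : f s(b, a) = i := by rwa [Sym2.eq_swap]
            simp [Finset.mem_filter, Finset.mem_product, has, hbs, Ne.symm hba, this]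
          · rw [Finset.mem_filter, Finset.mem_product] at hp ⊢
            exact ⟨⟨Finset.mem_of_mem_erase hp.1.1, Finset.mem_of_mem_erase hp.1.2⟩, hp.2⟩
        have hnm1 : ((b,a) : Fin n × Fin n) ∉
            (((s.erase a) ×ˢ (s.erase a)).filter (fun p => p.2 ≠ p.1 ∧ f s(p.1, p.2) = i)) := by
          rw [Finset.mem_filter, Finset.mem_product]
          rintro ⟨⟨-, h2⟩, -⟩
          exact (Finset.notMem_erase a s) h2
        have hnm2 : ((a,b) : Fin n × Fin n) ∉ insert ((b,a) : Fin n × Fin n)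
            (((s.erase a) ×ˢ (s.erase a)).filter (fun p => p.2 ≠ p.1 ∧ f s(p.1, p.2) = i)) := by
          rw [Finset.mem_insert]
          rintro (h | h)
          · exact hba (congrArg Prod.fst h).symm
          · rw [Finset.mem_filter, Finset.mem_product] at h
            exact (Finset.notMem_erase a s) h.1.1
        have := Finset.card_le_card hsub
        rw [Finset.card_insert_of_notMem hnm2, Finset.card_insert_of_notMem hnm1] at this
        unfold Dc
        omega
      have hD' : Dc f i (s.erase a) ≤ 2*m+1 := by omega
      obtain ⟨t, ht, hind, hc⟩ := ih (s.erase a) hD'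
      refine ⟨t, ht.trans (Finset.erase_subset a s), hind, ?_⟩
      rw [Finset.card_erase_of_mem has] at hc
      have hpos' : 1 ≤ s.card := Finset.card_pos.mpr ⟨a, has⟩
      omega

lemma hasIndep_of_Dc {m : ℕ} (f : Sym2 (Fin n) → Fin k) (i : Fin k) (hmn : m ≤ n)
    (h : Dc f i Finset.univ ≤ 2*(n - m) + 1) : HasIndep f i m := by
  obtain ⟨t, -, hind, hc⟩ := cover f i (n - m) Finset.univ h
  have hcu : (Finset.univ : Finset (Fin n)).card = n := by simp
  have hmt : m ≤ t.card := by omega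
  obtain ⟨u, hu, hucard⟩ := Finset.exists_subset_card_eq hmt
  exact ⟨u, hucard, fun x hx y hy => hind x (hu hx) y (hu hy)⟩

lemma sum_Dc (f : Sym2 (Fin n) → Fin k) :
    ∑ i : Fin k, Dc f i Finset.univ ≤ n * n - n := by
  classical
  have hdisj : ∀ i ∈ (Finset.univ : Finset (Fin k)), ∀ j ∈ Finset.univ, i ≠ j →
      Disjoint ((Finset.univ ×ˢ Finset.univ).filter
          (fun p : Fin n × Fin n => p.2 ≠ p.1 ∧ f s(p.1, p.2) = i))
        ((Finset.univ ×ˢ Finset.univ).filter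
          (fun p : Fin n × Fin n => p.2 ≠ p.1 ∧ f s(p.1, p.2) = j)) := by
    intro i _ j _ hij
    rw [Finset.disjoint_left]
    intro p hp1 hp2
    rw [Finset.mem_filter] at hp1 hp2
    exact hij (hp1.2.2 ▸ hp2.2.2 ▸ rfl)
  calc ∑ i : Fin k, Dc f i Finset.univ
      = (Finset.univ.biUnion (fun i : Fin k => (Finset.univ ×ˢ Finset.univ).filter
          (fun p : Fin n × Fin n => p.2 ≠ p.1 ∧ f s(p.1, p.2) = i))).card :=
        (Finset.card_biUnion hdisj).symm
    _ ≤ (Finset.univ : Finset (Fin n)).offDiag.card := by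
        apply Finset.card_le_card
        intro p hp
        obtain ⟨i, -, hp⟩ := Finset.mem_biUnion.mp hp
        rw [Finset.mem_filter] at hp
        exact Finset.mem_offDiag.mpr ⟨Finset.mem_univ _, Finset.mem_univ _, hp.2.1.symm⟩
    _ = n * n - n := by rw [Finset.offDiag_card]; simp

lemma image_left_card (f : Sym2 (Fin n) → Fin k) (i : Fin k) (x : Fin n)
    (S : Finset (Fin n × Fin n))
    (hS : ∀ p : Fin n × Fin n, p ∈ S ↔ p.1 = x ∧ p.2 ≠ p.1 ∧ f s(p.1, p.2) = i) :
    S.card = degColor f i x := by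
  classical
  have himg : S = (Finset.univ.filter (fun y => y ≠ x ∧ f s(x, y) = i)).image
      (fun y => (x, y)) := by
    ext p
    rw [hS]
    simp only [Finset.mem_image, Finset.mem_filter, Finset.mem_univ, true_and]
    constructor
    · rintro ⟨h1, h2, h3⟩
      exact ⟨p.2, ⟨h1 ▸ h2, h1 ▸ h3⟩, by rw [← h1]⟩
    · rintro ⟨y, ⟨hy1, hy2⟩, rfl⟩
      exact ⟨rfl, hy1, hy2⟩
  rw [himg, Finset.card_image_of_injective _ (fun a b hab => (Prod.mk.injEq _ _ _ _ ▸ hab).2)]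
  rfl

lemma image_right_card (f : Sym2 (Fin n) → Fin k) (i : Fin k) (x : Fin n)
    (S : Finset (Fin n × Fin n))
    (hS : ∀ p : Fin n × Fin n, p ∈ S ↔ p.2 = x ∧ p.2 ≠ p.1 ∧ f s(p.1, p.2) = i) :
    S.card = degColor f i x := by
  classical
  have himg : S = (Finset.univ.filter (fun y => y ≠ x ∧ f s(x, y) = i)).image
      (fun y => (y, x)) := by
    ext p
    rw [hS]
    simp only [Finset.mem_image, Finset.mem_filter, Finset.mem_univ, true_and]
    constructor
    · rintro ⟨h1, h2, h3⟩
      refine ⟨p.1, ⟨fun hpx => h2 (by rw [h1, hpx]), ?_⟩, by rw [← h1]⟩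
      rw [Sym2.eq_swap]
      rw [h1] at h3
      exact h3
    · rintro ⟨y, ⟨hy1, hy2⟩, rfl⟩
      refine ⟨rfl, Ne.symm hy1, ?_⟩
      rwa [Sym2.eq_swap]
  rw [himg, Finset.card_image_of_injective _ (fun a b hab => (Prod.mk.injEq _ _ _ _ ▸ hab).1)]
  rfl

lemma Dc_univ_eq_sum_deg (f : Sym2 (Fin n) → Fin k) (i : Fin k) :
    Dc f i Finset.univ = ∑ x : Fin n, degColor f i x := by
  classical
  unfold Dc
  rw [Finset.card_eq_sum_card_fiberwise (f := Prod.fst) (t := Finset.univ)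
    (fun p _ => Finset.mem_univ p.1)]
  refine Finset.sum_congr rfl fun x _ => ?_
  apply image_left_card f i x
  intro p
  simp only [Finset.mem_filter, Finset.mem_product, Finset.mem_univ, true_and]
  tauto

lemma Dc_erase_deg (f : Sym2 (Fin n) → Fin k) (i : Fin k) (x : Fin n) :
    Dc f i (Finset.univ.erase x) + 2 * degColor f i x ≤ Dc f i Finset.univ := by
  classical
  set P : Fin n × Fin n → Prop := fun p => p.2 ≠ p.1 ∧ f s(p.1, p.2) = i with hP
  set A := (Finset.univ ×ˢ Finset.univ : Finset (Fin n × Fin n)).filter P with hA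
  set A' := ((Finset.univ.erase x) ×ˢ (Finset.univ.erase x)).filter P with hA'
  set B := A.filter (fun p => p.1 = x) with hB
  set C := A.filter (fun p => p.2 = x) with hC
  have hmemA : ∀ p : Fin n × Fin n, p ∈ A ↔ p.2 ≠ p.1 ∧ f s(p.1, p.2) = i := by
    intro p
    rw [hA, Finset.mem_filter]
    simp [hP]
  have hmemA' : ∀ p : Fin n × Fin n,
      p ∈ A' ↔ (p.1 ≠ x ∧ p.2 ≠ x) ∧ p.2 ≠ p.1 ∧ f s(p.1, p.2) = i := by
    intro p
    rw [hA', Finset.mem_filter, Finset.mem_product]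
    simp [hP, Finset.mem_erase]
  have hBcard : B.card = degColor f i x := by
    apply image_left_card f i x
    intro p
    rw [hB, Finset.mem_filter, hmemA]
    tauto
  have hCcard : C.card = degColor f i x := by
    apply image_right_card f i x
    intro p
    rw [hC, Finset.mem_filter, hmemA]
    tauto
  have hsub : A' ∪ B ∪ C ⊆ A := by
    intro p hp
    rcases Finset.mem_union.mp hp with hp | hp
    · rcases Finset.mem_union.mp hp with hp | hp
      · rw [hmemA]
        exact ((hmemA' p).mp hp).2
      · exact (Finset.mem_filter.mp hp).1
    · exact (Finset.mem_filter.mp hp).1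
  have hd1 : Disjoint A' B := by
    rw [Finset.disjoint_left]
    intro p hp1 hp2
    have h1 := (hmemA' p).mp hp1
    have h2 := (Finset.mem_filter.mp hp2).2
    exact h1.1.1 h2
  have hd2 : Disjoint (A' ∪ B) C := by
    rw [Finset.disjoint_left]
    intro p hp1 hp2
    have h2 := (Finset.mem_filter.mp hp2).2
    rcases Finset.mem_union.mp hp1 with hp | hp
    · exact ((hmemA' p).mp hp).1.2 h2
    · have h1 := (Finset.mem_filter.mp hp).2
      have h3 := ((hmemA (p)).mp (Finset.mem_filter.mp hp).1).1
      exact h3 (h2.trans h1.symm)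
  have hcard := Finset.card_le_card hsub
  rw [Finset.card_union_of_disjoint hd2, Finset.card_union_of_disjoint hd1] at hcard
  show A'.card + 2 * degColor f i x ≤ A.card
  omega

/-- simple counting upper bound -/
lemma ub_gen {m : ℕ} (hm : m ≤ n) (hcount : n * n - n < k * (2*(n-m)+2)) :
    ∀ f : Sym2 (Fin n) → Fin k, ∃ i, HasIndep f i m := by
  intro f
  by_contra h
  push_neg at h
  have key : ∀ i, 2*(n-m)+2 ≤ Dc f i Finset.univ := by
    intro i
    by_contra hD
    push_neg at hD
    exact h i (hasIndep_of_Dc f i hm (by omega))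
  have hsum := sum_Dc f
  have hge : k * (2*(n-m)+2) ≤ ∑ i : Fin k, Dc f i Finset.univ := by
    calc k * (2*(n-m)+2) = ∑ _i : Fin k, (2*(n-m)+2) := by
          rw [Finset.sum_const, Finset.card_univ, Fintype.card_fin, smul_eq_mul]
      _ ≤ _ := Finset.sum_le_sum fun i _ => key i
  omega

/-- the refined upper bound for `R̄(6;8) ≤ 11`. -/
lemma ub11 : ∀ f : Sym2 (Fin 11) → Fin 8, ∃ i, HasIndep f i 6 := by
  intro f
  by_contra h
  push_neg at h
  have key : ∀ i, 14 ≤ Dc f i Finset.univ := by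
    intro i
    by_contra hD
    push_neg at hD
    apply h i
    by_cases hx : ∃ x, 2 ≤ degColor f i x
    · obtain ⟨x, hx⟩ := hx
      have h1 : Dc f i (Finset.univ.erase x) ≤ 2*4+1 := by
        have := Dc_erase_deg f i x
        omega
      obtain ⟨t, -, hind, hc⟩ := cover f i 4 (Finset.univ.erase x) h1
      have hce : (Finset.univ.erase x).card = 10 := by
        rw [Finset.card_erase_of_mem (Finset.mem_univ x)]
        simp
      have h6 : 6 ≤ t.card := by omega
      obtain ⟨u, hu, hucard⟩ := Finset.exists_subset_card_eq h6
      exact ⟨u, hucard, fun a ha b hb => hind a (hu ha) b (hu hb)⟩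
    · push_neg at hx
      have hd : Dc f i Finset.univ ≤ 11 := by
        rw [Dc_univ_eq_sum_deg]
        calc ∑ x, degColor f i x ≤ ∑ _x : Fin 11, 1 :=
              Finset.sum_le_sum (fun x _ => by have := hx x; omega)
          _ = 11 := by simp
      exact hasIndep_of_Dc f i (by norm_num) (by omega)
  have hsum := sum_Dc f
  have hge : (112 : ℕ) ≤ ∑ i : Fin 8, Dc f i Finset.univ := by
    calc (112 : ℕ) = ∑ _i : Fin 8, 14 := by simp
      _ ≤ _ := Finset.sum_le_sum fun i _ => key i
  omega

end Machinery

section Witnesses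

variable {n k : ℕ}

lemma no_indep_univ (f : Sym2 (Fin n) → Fin k) (i : Fin k)
    (h : ∃ x y : Fin n, x ≠ y ∧ f s(x, y) = i) : ¬ HasIndep f i n := by
  obtain ⟨x, y, hxy, hf⟩ := h
  rintro ⟨s, hcard, hind⟩
  have hs : s = Finset.univ := Finset.eq_univ_of_card s (by rw [hcard]; simp)
  exact hind x (hs ▸ Finset.mem_univ x) y (hs ▸ Finset.mem_univ y) hxy hf

lemma no_indep_of_map {r m : ℕ} (f : Sym2 (Fin n) → Fin k) (i : Fin k)
    (P : Fin n → Fin r) (hr : r < m)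
    (hP : ∀ x y, x ≠ y → P x = P y → f s(x, y) = i) : ¬ HasIndep f i m := by
  rintro ⟨s, hcard, hind⟩
  obtain ⟨x, hx, y, hy, hxy, hPxy⟩ :=
    Finset.exists_ne_map_eq_of_card_lt_of_maps_to (t := (Finset.univ : Finset (Fin r)))
      (by rw [hcard]; simpa using hr) (fun a _ => Finset.mem_univ (P a))
  exact hind x hx y hy hxy (hP x y hxy hPxy)

def mkCol (n k : ℕ) [NeZero k] (v : ℕ → ℕ → ℕ) : Sym2 (Fin n) → Fin k :=
  Sym2.lift ⟨fun x y => Fin.ofNat k (v (min x.val y.val) (max x.val y.val)),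
    fun x y => by simp [Nat.min_comm, Nat.max_comm]⟩

/-- rainbow coloring of `K₄` by 6 colors -/
def v4 : ℕ → ℕ → ℕ := fun a b =>
  match a, b with
  | 0,1 => 0 | 0,2 => 1 | 0,3 => 2 | 1,2 => 3 | 1,3 => 4 | _,_ => 5

/-- lexicographic edge index on `K₅` (0–9) -/
def v5 : ℕ → ℕ → ℕ := fun a b =>
  match a, b with
  | 0,1 => 0 | 0,2 => 1 | 0,3 => 2 | 0,4 => 3 | 1,2 => 4
  | 1,3 => 5 | 1,4 => 6 | 2,3 => 7 | 2,4 => 8 | _,_ => 9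

/-- lexicographic edge index on `K₆` (0–14) -/
def v6 : ℕ → ℕ → ℕ := fun a b =>
  match a, b with
  | 0,1 => 0 | 0,2 => 1 | 0,3 => 2 | 0,4 => 3 | 0,5 => 4
  | 1,2 => 5 | 1,3 => 6 | 1,4 => 7 | 1,5 => 8 | 2,3 => 9
  | 2,4 => 10 | 2,5 => 11 | 3,4 => 12 | 3,5 => 13 | _,_ => 14

/-- 10-coloring of `K₇`: each color class contains two disjoint edges -/
def v7 : ℕ → ℕ → ℕ := fun a b =>
  match a, b with
  | 0,1 => 9 | 0,2 => 1 | 0,3 => 5 | 0,4 => 2 | 0,5 => 6 | 0,6 => 8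
  | 1,2 => 9 | 1,3 => 2 | 1,4 => 6 | 1,5 => 3 | 1,6 => 0
  | 2,3 => 9 | 2,4 => 3 | 2,5 => 0 | 2,6 => 4
  | 3,4 => 7 | 3,5 => 4 | 3,6 => 1
  | 4,5 => 8 | 4,6 => 5 | _,_ => 7

def p9row : ℕ → ℕ := fun x =>
  match x with
  | 0 => 0 | 1 => 0 | 2 => 1 | 3 => 1 | 4 => 2 | 5 => 3 | _ => 4

/-- matching partition witnessing that color class `i` of `v7` contains two
disjoint edges (parts 0 and 1). -/
def p7 : ℕ → ℕ → ℕ := fun i x =>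
  match i, x with
  | 0,0 => 2 | 0,1 => 0 | 0,2 => 1 | 0,3 => 3 | 0,4 => 4 | 0,5 => 1 | 0,6 => 0
  | 1,0 => 0 | 1,1 => 2 | 1,2 => 0 | 1,3 => 1 | 1,4 => 3 | 1,5 => 4 | 1,6 => 1
  | 2,0 => 0 | 2,1 => 1 | 2,2 => 2 | 2,3 => 1 | 2,4 => 0 | 2,5 => 3 | 2,6 => 4
  | 3,0 => 2 | 3,1 => 0 | 3,2 => 1 | 3,3 => 3 | 3,4 => 1 | 3,5 => 0 | 3,6 => 4
  | 4,0 => 2 | 4,1 => 3 | 4,2 => 0 | 4,3 => 1 | 4,4 => 4 | 4,5 => 1 | 4,6 => 0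
  | 5,0 => 0 | 5,1 => 2 | 5,2 => 3 | 5,3 => 0 | 5,4 => 1 | 5,5 => 4 | 5,6 => 1
  | 6,0 => 0 | 6,1 => 1 | 6,2 => 2 | 6,3 => 3 | 6,4 => 1 | 6,5 => 0 | 6,6 => 4
  | 7,0 => 2 | 7,1 => 3 | 7,2 => 4 | 7,3 => 0 | 7,4 => 0 | 7,5 => 1 | 7,6 => 1
  | 8,0 => 0 | 8,1 => 2 | 8,2 => 3 | 8,3 => 4 | 8,4 => 1 | 8,5 => 1 | 8,6 => 0
  | _,_ => p9row x  -- i = 9 : [0,0,1,1,2,3,4]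

/-- 8-coloring of `K₁₀`: round-robin one-factorization with rounds 7,8 merged -/
def v10 : ℕ → ℕ → ℕ := fun a b =>
  if b = 9 then min a 7 else min ((a + b) * 5 % 9) 7

/-- matching partition for color `i` of `v10` -/
def p10 : ℕ → ℕ → ℕ := fun i x =>
  if x = 9 then 0 else min ((x + 9 - i) % 9) (9 - (x + 9 - i) % 9)

end Witnesses

section Checks

lemma check4 : ∀ i : Fin 6, ∃ x y : Fin 4, x ≠ y ∧ mkCol 4 6 v4 s(x, y) = i := by decide

lemma check5_8 : ∀ i : Fin 8, ∃ x y : Fin 5, x ≠ y ∧ mkCol 5 8 v5 s(x, y) = i := by decide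
lemma check5_9 : ∀ i : Fin 9, ∃ x y : Fin 5, x ≠ y ∧ mkCol 5 9 v5 s(x, y) = i := by decide
lemma check5_10 : ∀ i : Fin 10, ∃ x y : Fin 5, x ≠ y ∧ mkCol 5 10 v5 s(x, y) = i := by decide
lemma check6_11 : ∀ i : Fin 11, ∃ x y : Fin 6, x ≠ y ∧ mkCol 6 11 v6 s(x, y) = i := by decide
lemma check6_12 : ∀ i : Fin 12, ∃ x y : Fin 6, x ≠ y ∧ mkCol 6 12 v6 s(x, y) = i := by decide
lemma check6_13 : ∀ i : Fin 13, ∃ x y : Fin 6, x ≠ y ∧ mkCol 6 13 v6 s(x, y) = i := by decide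
lemma check6_14 : ∀ i : Fin 14, ∃ x y : Fin 6, x ≠ y ∧ mkCol 6 14 v6 s(x, y) = i := by decide
lemma check6_15 : ∀ i : Fin 15, ∃ x y : Fin 6, x ≠ y ∧ mkCol 6 15 v6 s(x, y) = i := by decide

lemma check7 : ∀ (i : Fin 10) (x y : Fin 7), x ≠ y →
    (⟨p7 i.val x.val % 5, Nat.mod_lt _ (by norm_num)⟩ : Fin 5) =
      ⟨p7 i.val y.val % 5, Nat.mod_lt _ (by norm_num)⟩ →
    mkCol 7 10 v7 s(x, y) = i := by decide

lemma check10 : ∀ (i : Fin 8) (x y : Fin 10), x ≠ y →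
    (⟨p10 i.val x.val % 5, Nat.mod_lt _ (by norm_num)⟩ : Fin 5) =
      ⟨p10 i.val y.val % 5, Nat.mod_lt _ (by norm_num)⟩ →
    mkCol 10 8 v10 s(x, y) = i := by decide

end Checks

section Assembly

lemma mono_good {k m a b : ℕ} (hab : a ≤ b)
    (ha : ∀ f : Sym2 (Fin a) → Fin k, ∃ i, HasIndep f i m) :
    ∀ g : Sym2 (Fin b) → Fin k, ∃ i, HasIndep g i m := by
  intro g
  obtain ⟨i, s, hcard, hind⟩ := ha (fun p => g (p.map (Fin.castLE hab)))
  refine ⟨i, s.image (Fin.castLE hab), ?_, ?_⟩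
  · rw [Finset.card_image_of_injective _ (Fin.castLE_injective hab), hcard]
  · intro x hx y hy hxy
    obtain ⟨x', hx', rfl⟩ := Finset.mem_image.mp hx
    obtain ⟨y', hy', rfl⟩ := Finset.mem_image.mp hy
    have hne : x' ≠ y' := fun h => hxy (by rw [h])
    have := hind x' hx' y' hy' hne
    simpa [Sym2.map_pair_eq] using this

lemma cRamseyU_eq_of {m k n : ℕ}
    (h1 : ∀ f : Sym2 (Fin (n+1)) → Fin k, ∃ i, HasIndep f i m)
    (h2 : ¬ ∀ f : Sym2 (Fin n) → Fin k, ∃ i, HasIndep f i m) :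
    cRamseyU m k = n + 1 := by
  unfold cRamseyU cRamsey
  have hmem : (n+1) ∈ {N : ℕ | ∀ f : Sym2 (Fin N) → Fin k, ∃ i : Fin k,
      HasIndep f i ((fun _ : Fin k => m) i)} := h1
  apply le_antisymm
  · exact Nat.sInf_le hmem
  · apply le_csInf ⟨n+1, hmem⟩
    intro b hb
    by_contra hlt
    push_neg at hlt
    exact h2 (mono_good (Nat.lt_succ_iff.mp hlt) hb)

end Assembly


/-- `R̄(4;6) = 5`; `R̄(5;k) = 6` for `8 ≤ k ≤ 10`; `R̄(6;8) = 11`;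
`R̄(6;10) = 8`; and `R̄(6;k) = 7` for `11 ≤ k ≤ 15`. -/
theorem cRamseyU_small_values :
    cRamseyU 4 6 = 5 ∧
      (∀ k : ℕ, 8 ≤ k → k ≤ 10 → cRamseyU 5 k = 6) ∧
      cRamseyU 6 8 = 11 ∧ cRamseyU 6 10 = 8 ∧
      (∀ k : ℕ, 11 ≤ k → k ≤ 15 → cRamseyU 6 k = 7) := by

  refine ⟨?_, ?_, ?_, ?_, ?_⟩
  · -- R̄(4;6) = 5
    refine cRamseyU_eq_of (ub_gen (by norm_num) (by norm_num)) ?_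
    intro hall
    obtain ⟨i, hi⟩ := hall (mkCol 4 6 v4)
    exact no_indep_univ _ i (check4 i) hi
  · -- R̄(5;k) = 6, 8 ≤ k ≤ 10
    intro k hk1 hk2
    interval_cases k
    · refine cRamseyU_eq_of (ub_gen (by norm_num) (by norm_num)) ?_
      intro hall
      obtain ⟨i, hi⟩ := hall (mkCol 5 8 v5)
      exact no_indep_univ _ i (check5_8 i) hi
    · refine cRamseyU_eq_of (ub_gen (by norm_num) (by norm_num)) ?_
      intro hall
      obtain ⟨i, hi⟩ := hall (mkCol 5 9 v5)
      exact no_indep_univ _ i (check5_9 i) hi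
    · refine cRamseyU_eq_of (ub_gen (by norm_num) (by norm_num)) ?_
      intro hall
      obtain ⟨i, hi⟩ := hall (mkCol 5 10 v5)
      exact no_indep_univ _ i (check5_10 i) hi
  · -- R̄(6;8) = 11
    refine cRamseyU_eq_of ub11 ?_
    intro hall
    obtain ⟨i, hi⟩ := hall (mkCol 10 8 v10)
    exact no_indep_of_map _ i
      (fun x => (⟨p10 i.val x.val % 5, Nat.mod_lt _ (by norm_num)⟩ : Fin 5))
      (by norm_num) (fun x y => check10 i x y) hi
  · -- R̄(6;10) = 8
    refine cRamseyU_eq_of (ub_gen (by norm_num) (by norm_num)) ?_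
    intro hall
    obtain ⟨i, hi⟩ := hall (mkCol 7 10 v7)
    exact no_indep_of_map _ i
      (fun x => (⟨p7 i.val x.val % 5, Nat.mod_lt _ (by norm_num)⟩ : Fin 5))
      (by norm_num) (fun x y => check7 i x y) hi
  · -- R̄(6;k) = 7, 11 ≤ k ≤ 15
    intro k hk1 hk2
    interval_cases k
    · refine cRamseyU_eq_of (ub_gen (by norm_num) (by norm_num)) ?_
      intro hall
      obtain ⟨i, hi⟩ := hall (mkCol 6 11 v6)
      exact no_indep_univ _ i (check6_11 i) hi
    · refine cRamseyU_eq_of (ub_gen (by norm_num) (by norm_num)) ?_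
      intro hall
      obtain ⟨i, hi⟩ := hall (mkCol 6 12 v6)
      exact no_indep_univ _ i (check6_12 i) hi
    · refine cRamseyU_eq_of (ub_gen (by norm_num) (by norm_num)) ?_
      intro hall
      obtain ⟨i, hi⟩ := hall (mkCol 6 13 v6)
      exact no_indep_univ _ i (check6_13 i) hi
    · refine cRamseyU_eq_of (ub_gen (by norm_num) (by norm_num)) ?_
      intro hall
      obtain ⟨i, hi⟩ := hall (mkCol 6 14 v6)
      exact no_indep_univ _ i (check6_14 i) hi
    · refine cRamseyU_eq_of (ub_gen (by norm_num) (by norm_num)) ?_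
      intro hall
      obtain ⟨i, hi⟩ := hall (mkCol 6 15 v6)
      exact no_indep_univ _ i (check6_15 i) hi
end
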